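/- (Core estimate in Derridj's criterion, after partial Fourier transform.) Let Ω ⊆ ℝⁿ be open, φ ∈ C¹(Ω;ℝ), ω a bounded open set with closure contained in Ω, ω̃ ⊆ ω measurable with ω∖ω̃ Lebesgue-null, M ≥ 1, C₁, C₂, C₃ > 0, and γ : ω̃ × [0,1] → Ω a measurable map such that: γ(t,0) = t and γ(t,1) ∉ ω for all t ∈ ω̃; for each t ∈ ω̃ the map τ ↦ γ(t,τ) is Lipschitz with |∂_τγ(t,τ)| ≤ C₂ at a.e. τ; for each τ ∈ [0,1] the map t ↦ γ(t,τ) is injective and differentiable on ω̃ with |det D_tγ(t,τ)| ≥ 1/C₁; and φ(γ(t,τ)) − φ(t) ≥ τ^M/C₃ for all (t,τ) ∈ ω̃ × [0,1]. Then for every ξ > 0 and every C¹ function v : ℝⁿ → ℂ with compact support contained in ω, setting g_j := ∂_j v − ξ(∂_jφ)v on Ω (j = 1,…,n), one has ∫_ω |v(t)|² dt ≤ C₁ C₂² (∫₀¹ e^{−ξτ^M/C₃} dτ)² ∫_Ω Σ_{j=1}^n |g_j(t)|² dt. -/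

import Mathlib

open MeasureTheory Real Set

open Filter intervalIntegral
open scoped ENNReal NNReal

noncomputable section

/-- Partial Fourier transform in the last variable `x`. -/
def fourierE (n : ℕ) (u : EuclideanSpace ℝ (Fin n) × ℝ → ℂ)
    (t : EuclideanSpace ℝ (Fin n)) (ξ : ℝ) : ℂ :=
  ∫ x : ℝ, Complex.exp (-(Complex.I * x * ξ)) * u (t, x)

/-- `L_j u = ∂_{t_j} u + i (∂_{t_j} φ) ∂_x u`. -/
def LopE (n : ℕ) (φ : EuclideanSpace ℝ (Fin n) → ℝ) (j : Fin n)
    (u : EuclideanSpace ℝ (Fin n) × ℝ → ℂ) (p : EuclideanSpace ℝ (Fin n) × ℝ) : ℂ :=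
  fderiv ℝ u p (EuclideanSpace.single j 1, (0 : ℝ))
    + Complex.I * (fderiv ℝ φ p.1 (EuclideanSpace.single j 1) : ℝ)
      * fderiv ℝ u p ((0 : EuclideanSpace ℝ (Fin n)), (1 : ℝ))

/-- Jacobian determinant of a map `ℝⁿ → ℝⁿ` at a point. -/
def jacDet (n : ℕ) (F : EuclideanSpace ℝ (Fin n) → EuclideanSpace ℝ (Fin n))
    (t : EuclideanSpace ℝ (Fin n)) : ℝ :=
  (Matrix.of fun i j => fderiv ℝ F t (EuclideanSpace.single j 1) i).det


/-- Local-to-global Lipschitz property on a compact set. -/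
lemma exists_lipschitzOnWith_of_compact {X F : Type*} [MetricSpace X] [NormedAddCommGroup F]
    {S : Set X} (hS : IsCompact S) {H : X → F}
    (hH : ∀ x ∈ S, ∃ (K : NNReal) (t : Set X), t ∈ nhds x ∧ LipschitzOnWith K H t) :
    ∃ K : NNReal, LipschitzOnWith K H S := by
  rcases S.eq_empty_or_nonempty with rfl | ⟨s₀, hs₀⟩
  · exact ⟨0, by simp [LipschitzOnWith]⟩
  choose! K t hmem hlip using hH
  have hball : ∀ x ∈ S, ∃ ε > 0, Metric.ball x ε ⊆ t x := by
    intro x hx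
    rcases Metric.mem_nhds_iff.1 (hmem x hx) with ⟨ε, hε, hsub⟩
    exact ⟨ε, hε, hsub⟩
  choose! ε hεpos hεball using hball
  obtain ⟨T, hTS, hcover⟩ := hS.elim_nhds_subcover (fun x => Metric.ball x (ε x / 2))
    (fun x hx => Metric.ball_mem_nhds x (by linarith [hεpos x hx]))
  have hTne : T.Nonempty := by
    rcases Set.mem_iUnion₂.1 (hcover hs₀) with ⟨x, hxT, _⟩
    exact ⟨x, hxT⟩
  set δ : ℝ := T.inf' hTne (fun x => ε x / 2) with hδdef
  have hδpos : 0 < δ := by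
    rw [hδdef]
    apply (Finset.lt_inf'_iff hTne).2
    intro x hx; linarith [hεpos x (hTS x hx)]
  set Km : ℝ := T.sup' hTne (fun x => (K x : ℝ)) with hKmdef
  have hKm0 : 0 ≤ Km := by
    rcases hTne with ⟨x, hx⟩
    exact le_trans (K x).2 (Finset.le_sup' (fun x => (K x : ℝ)) hx)
  have hcont : ContinuousOn H S := by
    intro x hx
    exact (((hlip x hx).continuousOn).continuousAt (hmem x hx)).continuousWithinAt
  obtain ⟨Mb, hMb⟩ := hS.exists_bound_of_continuousOn hcont
  have hMb0 : 0 ≤ Mb := le_trans (norm_nonneg _) (hMb s₀ hs₀)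
  set C : ℝ := max Km (2 * Mb / δ) with hCdef
  have hC0 : 0 ≤ C := le_trans hKm0 (le_max_left _ _)
  refine ⟨C.toNNReal, lipschitzOnWith_iff_dist_le_mul.2 ?_⟩
  intro x hx y hy
  rw [Real.coe_toNNReal _ hC0]
  rcases le_or_gt δ (dist x y) with hbig | hsmall
  · have h1 : dist (H x) (H y) ≤ 2 * Mb := by
      calc dist (H x) (H y) ≤ ‖H x‖ + ‖H y‖ := dist_le_norm_add_norm _ _
      _ ≤ Mb + Mb := add_le_add (hMb x hx) (hMb y hy)
      _ = 2 * Mb := by ring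
    have h2 : 2 * Mb ≤ (2 * Mb / δ) * dist x y := by
      rw [div_mul_eq_mul_div, le_div_iff₀ hδpos]
      have : 2 * Mb * δ ≤ 2 * Mb * dist x y :=
        mul_le_mul_of_nonneg_left hbig (by linarith)
      linarith
    calc dist (H x) (H y) ≤ (2 * Mb / δ) * dist x y := le_trans h1 h2
    _ ≤ C * dist x y := mul_le_mul_of_nonneg_right (le_max_right _ _) dist_nonneg
  · rcases Set.mem_iUnion₂.1 (hcover hx) with ⟨z, hzT, hxz⟩
    have hzS : z ∈ S := hTS z hzT
    have hδle : δ ≤ ε z / 2 := Finset.inf'_le _ hzT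
    have hxball : x ∈ Metric.ball z (ε z) := by
      have := Metric.mem_ball.1 hxz
      exact Metric.mem_ball.2 (by linarith [hεpos z hzS])
    have hyball : y ∈ Metric.ball z (ε z) := by
      have h1 : dist x z < ε z / 2 := Metric.mem_ball.1 hxz
      have : dist y z ≤ dist y x + dist x z := dist_triangle _ _ _
      have : dist y z < δ + ε z / 2 := by rw [dist_comm x y] at hsmall; linarith
      exact Metric.mem_ball.2 (by linarith)
    have hlz := lipschitzOnWith_iff_dist_le_mul.1 (hlip z hzS)
    have := hlz x (hεball z hzS hxball) y (hεball z hzS hyball)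
    calc dist (H x) (H y) ≤ (K z : ℝ) * dist x y := this
    _ ≤ Km * dist x y := mul_le_mul_of_nonneg_right (Finset.le_sup' (fun x => (K x : ℝ)) hzT) dist_nonneg
    _ ≤ C * dist x y := mul_le_mul_of_nonneg_right (le_max_left _ _) dist_nonneg

lemma ftc_lipschitz (f : ℝ → ℂ) (K : NNReal) (hf : LipschitzWith K f) (g : ℝ → ℝ)
    (h : ∀ᵐ τ ∂(volume.restrict (Set.Ioo (0:ℝ) 1)), ∃ d : ℂ, HasDerivAt f d τ ∧ ‖d‖ ≤ g τ) :
    ENNReal.ofReal ‖f 1 - f 0‖ ≤ ∫⁻ τ in Set.Ioo (0:ℝ) 1, ENNReal.ofReal (g τ) := by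
  have fc : Continuous f := hf.continuous
  set hh : ℕ → ℝ := fun k => ((k : ℝ) + 1)⁻¹ with hhdef
  have hhpos : ∀ k, 0 < hh k := fun k => by positivity
  have hhlim : Tendsto hh atTop (nhds 0) := by
    simpa [hhdef, one_div] using tendsto_one_div_add_atTop_nhds_zero_nat (𝕜 := ℝ)
  set q : ℕ → ℝ → ℂ := fun k τ => ((k : ℝ) + 1) • (f (τ + hh k) - f τ) with hqdef
  have hqcont : ∀ k, Continuous (q k) :=
    fun k => by simp only [hqdef]; fun_prop
  -- uniform bound ‖q k τ‖ ≤ K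
  have hqbdd : ∀ k τ, ‖q k τ‖ ≤ (K : ℝ) := by
    intro k τ
    have h1 : ‖f (τ + hh k) - f τ‖ ≤ (K : ℝ) * hh k := by
      have := hf.dist_le_mul (τ + hh k) τ
      simpa [dist_eq_norm, abs_of_pos (hhpos k)] using this
    have h2 : ‖q k τ‖ = ((k : ℝ) + 1) * ‖f (τ + hh k) - f τ‖ := by
      simp only [hqdef]
      rw [norm_smul, Real.norm_eq_abs, abs_of_pos (by positivity)]
    rw [h2]
    calc ((k : ℝ) + 1) * ‖f (τ + hh k) - f τ‖ ≤ ((k : ℝ) + 1) * ((K : ℝ) * hh k) := by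
          apply mul_le_mul_of_nonneg_left h1 (by positivity)
      _ = (K : ℝ) := by rw [mul_comm (K:ℝ), ← mul_assoc, show ((k:ℝ)+1) * hh k = 1 from mul_inv_cancel₀ (by positivity), one_mul]
  -- the interval integral of q k
  have hIi : ∀ (a : ℝ) (k : ℕ), ‖((k : ℝ) + 1) • (∫ τ in a..(a + hh k), f τ) - f a‖
      ≤ (K : ℝ) * hh k := by
    intro a k
    have hInt : ∀ b c : ℝ, IntervalIntegrable f volume b c := fun b c =>
      fc.intervalIntegrable _ _
    have hmul1 : ((k : ℝ) + 1) * hh k = 1 := by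
      rw [hhdef]; exact mul_inv_cancel₀ (by positivity)
    have e1 : ((k : ℝ) + 1) • (∫ τ in a..(a + hh k), f τ) - f a
        = ((k : ℝ) + 1) • (∫ τ in a..(a + hh k), (f τ - f a)) := by
      rw [intervalIntegral.integral_sub (hInt _ _) (intervalIntegrable_const),
        intervalIntegral.integral_const, smul_sub, smul_smul,
        show a + hh k - a = hh k by ring, hmul1, one_smul]
    rw [e1]
    have e2 : ‖∫ τ in a..(a + hh k), (f τ - f a)‖ ≤ ((K : ℝ) * hh k) * |a + hh k - a| := by
      apply intervalIntegral.norm_integral_le_of_norm_le_const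
      intro x hx
      have hx' : x ∈ Set.Ioc a (a + hh k) := by
        rwa [Set.uIoc_of_le (by linarith [hhpos k])] at hx
      have h5 : ‖f x - f a‖ ≤ (K : ℝ) * |x - a| := by
        have := hf.dist_le_mul x a
        simpa [dist_eq_norm] using this
      have h6 : |x - a| ≤ hh k := by
        rw [abs_of_nonneg (by linarith [hx'.1.le] : (0:ℝ) ≤ x - a)]
        linarith [hx'.2]
      exact le_trans h5 (mul_le_mul_of_nonneg_left h6 (K.2))
    rw [norm_smul]
    rw [show |a + hh k - a| = hh k from by
      rw [show a + hh k - a = hh k by ring, abs_of_pos (hhpos k)]] at e2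
    calc ‖((k : ℝ) + 1)‖ * ‖∫ τ in a..(a + hh k), (f τ - f a)‖
        ≤ ((k : ℝ) + 1) * (((K : ℝ) * hh k) * hh k) := by
          apply mul_le_mul (le_of_eq (by rw [Real.norm_eq_abs, abs_of_pos]; positivity)) e2
            (norm_nonneg _) (by positivity)
      _ = (K : ℝ) * hh k := by
          rw [show ((k:ℝ)+1) * (((K:ℝ) * hh k) * hh k) = (((k:ℝ)+1) * hh k) * ((K:ℝ) * hh k) by
            ring, hmul1, one_mul]
  -- value of the integral of q k
  have hIq : ∀ k, (∫ τ in (0:ℝ)..1, q k τ)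
      = (((k : ℝ) + 1) • (∫ τ in (1:ℝ)..(1 + hh k), f τ) - f 1)
        - (((k : ℝ) + 1) • (∫ τ in (0:ℝ)..(0 + hh k), f τ) - f 0) + (f 1 - f 0) := by
    intro k
    have hInt : ∀ b c : ℝ, IntervalIntegrable f volume b c := fun b c =>
      fc.intervalIntegrable _ _
    have hInt' : ∀ b c : ℝ, IntervalIntegrable (fun τ => f (τ + hh k)) volume b c := fun b c =>
      (fc.comp (continuous_id.add continuous_const)).intervalIntegrable _ _
    have e1 : (∫ τ in (0:ℝ)..1, q k τ)
        = ((k : ℝ) + 1) • ((∫ τ in (0:ℝ)..1, f (τ + hh k)) - ∫ τ in (0:ℝ)..1, f τ) := by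
      rw [hqdef]
      simp only
      rw [intervalIntegral.integral_smul, intervalIntegral.integral_sub (hInt' 0 1) (hInt 0 1)]
    have e2 : (∫ τ in (0:ℝ)..1, f (τ + hh k)) = ∫ τ in (hh k)..(1 + hh k), f τ := by
      simpa using intervalIntegral.integral_comp_add_right f (hh k)
    have e3 : (∫ τ in (hh k)..(1 + hh k), f τ)
        = (∫ τ in (0:ℝ)..(1 + hh k), f τ) - ∫ τ in (0:ℝ)..(hh k), f τ :=
      (intervalIntegral.integral_interval_sub_left (hInt _ _) (hInt _ _)).symm
    have e4 : (∫ τ in (1:ℝ)..(1 + hh k), f τ)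
        = (∫ τ in (0:ℝ)..(1 + hh k), f τ) - ∫ τ in (0:ℝ)..1, f τ :=
      (intervalIntegral.integral_interval_sub_left (hInt _ _) (hInt _ _)).symm
    rw [e1, e2, e3, e4]
    simp only [zero_add]
    module
  -- convergence of the integrals
  have hconv : Tendsto (fun k => ∫ τ in (0:ℝ)..1, q k τ) atTop (nhds (f 1 - f 0)) := by
    rw [tendsto_iff_norm_sub_tendsto_zero]
    have hb : ∀ k, ‖(∫ τ in (0:ℝ)..1, q k τ) - (f 1 - f 0)‖
        ≤ (K : ℝ) * hh k + (K : ℝ) * hh k := by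
      intro k
      rw [hIq k]
      have heq : (((k : ℝ) + 1) • (∫ τ in (1:ℝ)..(1 + hh k), f τ) - f 1)
          - (((k : ℝ) + 1) • (∫ τ in (0:ℝ)..(0 + hh k), f τ) - f 0) + (f 1 - f 0) - (f 1 - f 0)
          = (((k : ℝ) + 1) • (∫ τ in (1:ℝ)..(1 + hh k), f τ) - f 1)
          - (((k : ℝ) + 1) • (∫ τ in (0:ℝ)..(0 + hh k), f τ) - f 0) := by abel
      rw [heq]
      exact le_trans (norm_sub_le _ _) (add_le_add (hIi 1 k) (hIi 0 k))
    have htz : Tendsto (fun k => (K : ℝ) * hh k + (K : ℝ) * hh k) atTop (nhds 0) := by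
      have h1 : Tendsto (fun k => (K : ℝ) * hh k) atTop (nhds 0) := by
        simpa using hhlim.const_mul (K : ℝ)
      simpa using h1.add h1
    exact squeeze_zero_norm (fun n => le_trans (le_of_eq (norm_norm _)) (hb n)) htz
  -- per-k bound: ofReal ‖∫ q k‖ ≤ ∫⁻ over Ioo of ofReal ‖q k‖
  have hIk : ∀ k, ENNReal.ofReal ‖∫ τ in (0:ℝ)..1, q k τ‖
      ≤ ∫⁻ τ in Set.Ioo (0:ℝ) 1, ENNReal.ofReal ‖q k τ‖ := by
    intro k
    have h1 : ‖∫ τ in (0:ℝ)..1, q k τ‖ ≤ ∫ τ in Set.Ioo (0:ℝ) 1, ‖q k τ‖ := by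
      refine le_trans (intervalIntegral.norm_integral_le_integral_norm zero_le_one) ?_
      rw [intervalIntegral.integral_of_le zero_le_one, integral_Ioc_eq_integral_Ioo]
    have h2 : (∫ τ in Set.Ioo (0:ℝ) 1, ‖q k τ‖)
        = (∫⁻ τ in Set.Ioo (0:ℝ) 1, ENNReal.ofReal ‖q k τ‖).toReal := by
      rw [integral_eq_lintegral_of_nonneg_ae]
      · exact Filter.Eventually.of_forall (fun τ => norm_nonneg _)
      · exact ((hqcont k).norm.aestronglyMeasurable)
    calc ENNReal.ofReal ‖∫ τ in (0:ℝ)..1, q k τ‖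
        ≤ ENNReal.ofReal (∫⁻ τ in Set.Ioo (0:ℝ) 1, ENNReal.ofReal ‖q k τ‖).toReal := by
          apply ENNReal.ofReal_le_ofReal; rw [← h2]; exact h1
      _ ≤ _ := ENNReal.ofReal_toReal_le
  -- reverse Fatou
  have hmeasq : ∀ k, Measurable fun τ => ENNReal.ofReal ‖q k τ‖ :=
    fun k => (hqcont k).norm.measurable.ennreal_ofReal
  have hfatou : limsup (fun k => ∫⁻ τ in Set.Ioo (0:ℝ) 1, ENNReal.ofReal ‖q k τ‖) atTop
      ≤ ∫⁻ τ in Set.Ioo (0:ℝ) 1, ENNReal.ofReal (g τ) := by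
    have hb : ∀ k, (fun τ => ENNReal.ofReal ‖q k τ‖)
        ≤ᵐ[volume.restrict (Set.Ioo (0:ℝ) 1)] (fun _ => (K : ℝ≥0∞)) := by
      intro k
      apply Filter.Eventually.of_forall
      intro τ
      calc ENNReal.ofReal ‖q k τ‖ ≤ ENNReal.ofReal (K : ℝ) :=
            ENNReal.ofReal_le_ofReal (hqbdd k τ)
        _ = (K : ℝ≥0∞) := ENNReal.ofReal_coe_nnreal
    have hfin : (∫⁻ _ in Set.Ioo (0:ℝ) 1, (K : ℝ≥0∞)) ≠ ⊤ := by
      rw [setLIntegral_const, Real.volume_Ioo]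
      simp
    refine le_trans (limsup_lintegral_le _ hmeasq hb hfin) ?_
    apply lintegral_mono_ae
    filter_upwards [h, ae_restrict_mem measurableSet_Ioo] with τ hτ hτmem
    obtain ⟨d, hd, hdg⟩ := hτ
    have hqlim : Tendsto (fun k => q k τ) atTop (nhds d) := by
      have hslope := hasDerivAt_iff_tendsto_slope.1 hd
      have htend : Tendsto (fun k => τ + hh k) atTop (nhdsWithin τ {τ}ᶜ) := by
        apply tendsto_nhdsWithin_of_tendsto_nhds_of_eventually_within
        · simpa using (tendsto_const_nhds (x := τ)).add hhlim
        · apply Filter.Eventually.of_forall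
          intro k
          simp only [Set.mem_compl_iff, Set.mem_singleton_iff]
          intro hcon
          have := hhpos k
          nlinarith [hcon.symm ▸ (rfl : τ + hh k = τ + hh k)]
      have hcomp := hslope.comp htend
      have heq : ∀ k, slope f τ (τ + hh k) = q k τ := by
        intro k
        rw [slope_def_module]
        simp only [hqdef, add_sub_cancel_left]
        congr 1
        rw [hhdef]
        simp
      rwa [show (slope f τ ∘ fun k => τ + hh k) = fun k => q k τ from funext heq] at hcomp
    have hnlim : Tendsto (fun k => ENNReal.ofReal ‖q k τ‖) atTop
        (nhds (ENNReal.ofReal ‖d‖)) :=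
      (ENNReal.continuous_ofReal.tendsto _).comp (hqlim.norm)
    rw [hnlim.limsup_eq]
    exact ENNReal.ofReal_le_ofReal hdg
  -- assemble
  have hl1 : Tendsto (fun k => ENNReal.ofReal ‖∫ τ in (0:ℝ)..1, q k τ‖) atTop
      (nhds (ENNReal.ofReal ‖f 1 - f 0‖)) :=
    (ENNReal.continuous_ofReal.tendsto _).comp hconv.norm
  calc ENNReal.ofReal ‖f 1 - f 0‖
      = limsup (fun k => ENNReal.ofReal ‖∫ τ in (0:ℝ)..1, q k τ‖) atTop := hl1.limsup_eq.symm
    _ ≤ limsup (fun k => ∫⁻ τ in Set.Ioo (0:ℝ) 1, ENNReal.ofReal ‖q k τ‖) atTop :=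
        Filter.limsup_le_limsup (Filter.Eventually.of_forall hIk)
    _ ≤ _ := hfatou

lemma jacDet_eq (n : ℕ) (F : EuclideanSpace ℝ (Fin n) → EuclideanSpace ℝ (Fin n))
    (t : EuclideanSpace ℝ (Fin n)) : jacDet n F t = (fderiv ℝ F t).det := by
  set b := (EuclideanSpace.basisFun (Fin n) ℝ).toBasis with hb
  show jacDet n F t = LinearMap.det
    ((fderiv ℝ F t : EuclideanSpace ℝ (Fin n) →ₗ[ℝ] EuclideanSpace ℝ (Fin n)))
  rw [← LinearMap.det_toMatrix b]
  unfold jacDet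
  congr 1

lemma euclid_decomp {n : ℕ} (u : EuclideanSpace ℝ (Fin n)) :
    ∑ j : Fin n, u j • EuclideanSpace.single j (1:ℝ) = u := by
  have h := (EuclideanSpace.basisFun (Fin n) ℝ).toBasis.sum_repr u
  simpa [OrthonormalBasis.coe_toBasis_repr_apply, EuclideanSpace.basisFun_repr,
    OrthonormalBasis.coe_toBasis, EuclideanSpace.basisFun_apply] using h

lemma euclid_CS {n : ℕ} (u : EuclideanSpace ℝ (Fin n)) (b : Fin n → ℂ) :
    ‖∑ j : Fin n, (u j : ℂ) * b j‖ ≤ ‖u‖ * Real.sqrt (∑ j : Fin n, ‖b j‖ ^ 2) := by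
  set a : EuclideanSpace ℂ (Fin n) := (WithLp.equiv 2 (Fin n → ℂ)).symm (fun j => (u j : ℂ))
  set bb : EuclideanSpace ℂ (Fin n) := (WithLp.equiv 2 (Fin n → ℂ)).symm b
  have ha : ∀ j, a j = (u j : ℂ) := fun j => rfl
  have hbb : ∀ j, bb j = b j := fun j => rfl
  have hinner : (inner ℂ a bb : ℂ) = ∑ j : Fin n, (u j : ℂ) * b j := by
    rw [PiLp.inner_apply]
    congr 1
    ext j
    rw [ha, hbb]
    simp [RCLike.inner_apply, Complex.conj_ofReal]
    ring
  have hna : ‖a‖ = ‖u‖ := by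
    rw [EuclideanSpace.norm_eq, EuclideanSpace.norm_eq]
    congr 1
    refine Finset.sum_congr rfl fun j _ => ?_
    rw [ha]
    simp [Complex.norm_real]
  have hnb : ‖bb‖ = Real.sqrt (∑ j : Fin n, ‖b j‖ ^ 2) := by
    rw [EuclideanSpace.norm_eq]
    exact congrArg Real.sqrt (Finset.sum_congr rfl fun j _ => by rw [hbb])
  calc ‖∑ j : Fin n, (u j : ℂ) * b j‖ = ‖(inner ℂ a bb : ℂ)‖ := by rw [hinner]
    _ ≤ ‖a‖ * ‖bb‖ := norm_inner_le_norm a bb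
    _ = ‖u‖ * Real.sqrt (∑ j : Fin n, ‖b j‖ ^ 2) := by rw [hna, hnb]

lemma key_pointwise (n : ℕ) (Ω : Set (EuclideanSpace ℝ (Fin n))) (hΩ : IsOpen Ω)
    (φ : EuclideanSpace ℝ (Fin n) → ℝ) (hφ : ContDiffOn ℝ 1 φ Ω)
    (ξ C₂ C₃ M : ℝ) (hξ : 0 < ξ) (hC₂ : 0 ≤ C₂) (hC₃ : 0 < C₃)
    (v : EuclideanSpace ℝ (Fin n) → ℂ) (hv : ContDiff ℝ 1 v)
    (c : ℝ → EuclideanSpace ℝ (Fin n)) (t : EuclideanSpace ℝ (Fin n)) (K : NNReal)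
    (hc0 : c 0 = t) (hc1 : v (c 1) = 0)
    (hcΩ : ∀ τ ∈ Set.Icc (0:ℝ) 1, c τ ∈ Ω)
    (hcLip : LipschitzOnWith K c (Set.Icc 0 1))
    (hcd : ∀ᵐ τ ∂(volume.restrict (Set.Icc (0:ℝ) 1)),
      DifferentiableAt ℝ c τ ∧ ‖deriv c τ‖ ≤ C₂)
    (hesc : ∀ τ ∈ Set.Icc (0:ℝ) 1, τ ^ M / C₃ ≤ φ (c τ) - φ t)
    (G2 : EuclideanSpace ℝ (Fin n) → ℝ) (hG2nn : ∀ x, 0 ≤ G2 x)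
    (hG2 : ∀ x u, ‖fderiv ℝ v x u - ((ξ * fderiv ℝ φ x u : ℝ) : ℂ) * v x‖
      ≤ ‖u‖ * Real.sqrt (G2 x)) :
    ENNReal.ofReal ‖v t‖ ≤ ENNReal.ofReal C₂ *
      ∫⁻ τ in Set.Ioo (0:ℝ) 1, ENNReal.ofReal (Real.exp (-(ξ * τ ^ M / C₃)))
        * ENNReal.ofReal (Real.sqrt (G2 (c τ))) := by
  -- the compact image of the curve
  set S : Set (EuclideanSpace ℝ (Fin n)) := c '' Set.Icc 0 1 with hSdef
  have hScpt : IsCompact S := isCompact_Icc.image_of_continuousOn hcLip.continuousOn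
  have hSΩ : S ⊆ Ω := by
    rintro x ⟨τ, hτ, rfl⟩
    exact hcΩ τ hτ
  -- the function H
  set H : EuclideanSpace ℝ (Fin n) → ℂ :=
    fun x => Real.exp (ξ * (φ t - φ x)) • v x with hHdef
  have hHc1 : ∀ x ∈ Ω, ContDiffAt ℝ 1 H x := by
    intro x hx
    have hφx : ContDiffAt ℝ 1 φ x := hφ.contDiffAt (hΩ.mem_nhds hx)
    exact ((Real.contDiff_exp.contDiffAt).comp x
      (contDiffAt_const.mul (contDiffAt_const.sub hφx))).smul (hv.contDiffAt)
  obtain ⟨L, hL⟩ := exists_lipschitzOnWith_of_compact hScpt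
    (fun x hx => (hHc1 x (hSΩ hx)).exists_lipschitzOnWith)
  -- the clamped curve
  set P : ℝ → ℝ := fun τ => ((Set.projIcc (0:ℝ) 1 zero_le_one τ) : ℝ) with hPdef
  have hPlip : LipschitzWith 1 P := by
    have := (LipschitzWith.subtype_val (Set.Icc (0:ℝ) 1)).comp
      (LipschitzWith.projIcc zero_le_one)
    rw [one_mul] at this
    exact this
  have hPmem : ∀ τ, P τ ∈ Set.Icc (0:ℝ) 1 := fun τ => (Set.projIcc (0:ℝ) 1 zero_le_one τ).2
  set w : ℝ → ℂ := fun τ => H (c (P τ)) with hwdef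
  have hwlip : LipschitzWith (L * K * 1) w := by
    have h1 : LipschitzOnWith (L * K) (H ∘ c) (Set.Icc 0 1) :=
      hL.comp hcLip (Set.mapsTo_image c _)
    have h2 : LipschitzOnWith (L * K * 1) (H ∘ c ∘ P) Set.univ :=
      h1.comp (hPlip.lipschitzOnWith) (fun τ _ => hPmem τ)
    rw [lipschitzOnWith_univ] at h2
    exact h2
  have hw0 : w 0 = v t := by
    have : P 0 = 0 := by
      rw [hPdef]
      simp [Set.projIcc_left]
    rw [hwdef]
    simp only [this, hc0, hHdef]
    simp
  have hw1 : w 1 = 0 := by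
    have : P 1 = 1 := by
      rw [hPdef]
      simp [Set.projIcc_right]
    rw [hwdef]
    simp only [this, hHdef, hc1, smul_zero]
  -- the a.e. derivative bound
  set gb : ℝ → ℝ :=
    fun τ => C₂ * (Real.exp (-(ξ * τ ^ M / C₃)) * Real.sqrt (G2 (c τ))) with hgbdef
  have hae : ∀ᵐ τ ∂(volume.restrict (Set.Ioo (0:ℝ) 1)),
      ∃ d : ℂ, HasDerivAt w d τ ∧ ‖d‖ ≤ gb τ := by
    filter_upwards [ae_restrict_of_ae_restrict_of_subset Set.Ioo_subset_Icc_self hcd,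
      ae_restrict_mem measurableSet_Ioo] with τ hdiff hτ
    obtain ⟨hdτ, hdC⟩ := hdiff
    have hτIcc : τ ∈ Set.Icc (0:ℝ) 1 := Set.Ioo_subset_Icc_self hτ
    have hx₀ : c τ ∈ Ω := hcΩ τ hτIcc
    have hφd : HasFDerivAt φ (fderiv ℝ φ (c τ)) (c τ) :=
      ((hφ.contDiffAt (hΩ.mem_nhds hx₀)).differentiableAt one_ne_zero).hasFDerivAt
    have hvd : HasFDerivAt v (fderiv ℝ v (c τ)) (c τ) :=
      (hv.differentiable one_ne_zero (c τ)).hasFDerivAt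
    have h1 : HasFDerivAt (fun y => φ t - φ y) (-fderiv ℝ φ (c τ)) (c τ) :=
      hφd.const_sub (φ t)
    have h2 : HasFDerivAt (fun y => ξ * (φ t - φ y)) (ξ • -fderiv ℝ φ (c τ)) (c τ) :=
      h1.const_mul ξ
    have h3 : HasDerivAt Real.exp (Real.exp (ξ * (φ t - φ (c τ)))) (ξ * (φ t - φ (c τ))) :=
      Real.hasDerivAt_exp _
    have hs : HasFDerivAt (fun y => Real.exp (ξ * (φ t - φ y)))
        (Real.exp (ξ * (φ t - φ (c τ))) • (ξ • -fderiv ℝ φ (c τ))) (c τ) :=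
      by have := h3.comp_hasFDerivAt (c τ) h2; exact this
    have hH : HasFDerivAt H
        (Real.exp (ξ * (φ t - φ (c τ))) • fderiv ℝ v (c τ)
          + (Real.exp (ξ * (φ t - φ (c τ))) • (ξ • -fderiv ℝ φ (c τ))).smulRight (v (c τ)))
        (c τ) := hs.smul hvd
    have hwc : HasDerivAt (H ∘ c)
        ((Real.exp (ξ * (φ t - φ (c τ))) • fderiv ℝ v (c τ)
          + (Real.exp (ξ * (φ t - φ (c τ))) • (ξ • -fderiv ℝ φ (c τ))).smulRight (v (c τ)))
          (deriv c τ)) τ :=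
      hH.comp_hasDerivAt τ hdτ.hasDerivAt
    have hev : w =ᶠ[nhds τ] (H ∘ c) := by
      filter_upwards [isOpen_Ioo.mem_nhds hτ] with τ' hτ'
      have : P τ' = τ' := by
        rw [hPdef]
        simp only
        rw [Set.projIcc_of_mem zero_le_one (Set.Ioo_subset_Icc_self hτ')]
      rw [hwdef]
      simp only [this]
      rfl
    have hw : HasDerivAt w _ τ := hwc.congr_of_eventuallyEq hev
    refine ⟨_, hw, ?_⟩
    -- compute the norm of the derivative
    set u := deriv c τ with hudef
    set ea : ℝ := Real.exp (ξ * (φ t - φ (c τ))) with headef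
    have hdeq : (ea • fderiv ℝ v (c τ)
        + (ea • (ξ • -fderiv ℝ φ (c τ))).smulRight (v (c τ))) u
        = (ea : ℂ) * (fderiv ℝ v (c τ) u
          - ((ξ * fderiv ℝ φ (c τ) u : ℝ) : ℂ) * v (c τ)) := by
      simp only [ContinuousLinearMap.add_apply, ContinuousLinearMap.coe_smul',
        Pi.smul_apply, ContinuousLinearMap.smulRight_apply,
        ContinuousLinearMap.neg_apply]
      rw [Complex.real_smul, Complex.real_smul]
      simp only [smul_eq_mul]
      push_cast
      ring
    rw [hdeq]
    have hea0 : 0 ≤ ea := Real.exp_nonneg _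
    have hnorm : ‖(ea : ℂ) * (fderiv ℝ v (c τ) u
        - ((ξ * fderiv ℝ φ (c τ) u : ℝ) : ℂ) * v (c τ))‖
        = ea * ‖fderiv ℝ v (c τ) u - ((ξ * fderiv ℝ φ (c τ) u : ℝ) : ℂ) * v (c τ)‖ := by
      rw [norm_mul, Complex.norm_real, Real.norm_eq_abs, abs_of_nonneg hea0]
    rw [hnorm]
    have hb1 : ‖fderiv ℝ v (c τ) u - ((ξ * fderiv ℝ φ (c τ) u : ℝ) : ℂ) * v (c τ)‖
        ≤ C₂ * Real.sqrt (G2 (c τ)) := by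
      refine le_trans (hG2 (c τ) u) ?_
      exact mul_le_mul_of_nonneg_right hdC (Real.sqrt_nonneg _)
    have hb2 : ea ≤ Real.exp (-(ξ * τ ^ M / C₃)) := by
      rw [headef]
      apply Real.exp_le_exp.2
      have := hesc τ hτIcc
      have hτM : 0 ≤ τ ^ M := Real.rpow_nonneg hτIcc.1 M
      calc ξ * (φ t - φ (c τ)) ≤ ξ * (-(τ ^ M / C₃)) := by
            apply mul_le_mul_of_nonneg_left _ hξ.le
            linarith
        _ = -(ξ * τ ^ M / C₃) := by ring
    calc ea * ‖fderiv ℝ v (c τ) u - ((ξ * fderiv ℝ φ (c τ) u : ℝ) : ℂ) * v (c τ)‖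
        ≤ Real.exp (-(ξ * τ ^ M / C₃)) * (C₂ * Real.sqrt (G2 (c τ))) := by
          apply mul_le_mul hb2 hb1 (norm_nonneg _) (Real.exp_nonneg _)
      _ = gb τ := by rw [hgbdef]; ring
  -- apply the FTC lemma
  have hftc := ftc_lipschitz w (L * K * 1) hwlip gb hae
  rw [hw1, hw0] at hftc
  have hn : ‖(0 : ℂ) - v t‖ = ‖v t‖ := by rw [zero_sub, norm_neg]
  rw [hn] at hftc
  apply le_trans hftc
  apply le_of_eq
  have heq : ∀ τ : ℝ, ENNReal.ofReal (gb τ)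
      = ENNReal.ofReal C₂ * (ENNReal.ofReal (Real.exp (-(ξ * τ ^ M / C₃)))
        * ENNReal.ofReal (Real.sqrt (G2 (c τ)))) := by
    intro τ
    rw [hgbdef]
    rw [ENNReal.ofReal_mul hC₂, ENNReal.ofReal_mul (Real.exp_nonneg _)]
  calc (∫⁻ τ in Set.Ioo (0:ℝ) 1, ENNReal.ofReal (gb τ))
      = ∫⁻ τ in Set.Ioo (0:ℝ) 1, ENNReal.ofReal C₂
          * (ENNReal.ofReal (Real.exp (-(ξ * τ ^ M / C₃)))
            * ENNReal.ofReal (Real.sqrt (G2 (c τ)))) := by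
        apply lintegral_congr
        intro τ
        exact heq τ
    _ = ENNReal.ofReal C₂ * ∫⁻ τ in Set.Ioo (0:ℝ) 1,
          ENNReal.ofReal (Real.exp (-(ξ * τ ^ M / C₃)))
            * ENNReal.ofReal (Real.sqrt (G2 (c τ))) :=
        lintegral_const_mul' _ _ ENNReal.ofReal_ne_top

/-- core estimate in Derridj's criterion, after partial Fourier
transform. -/
theorem derridj_core_estimate
    (n : ℕ) (Ω : Set (EuclideanSpace ℝ (Fin n))) (hΩ : IsOpen Ω)
    (φ : EuclideanSpace ℝ (Fin n) → ℝ) (hφ : ContDiffOn ℝ 1 φ Ω)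
    (M : ℝ) (hM : 1 ≤ M)
    (ω ω' : Set (EuclideanSpace ℝ (Fin n)))
    (C₁ C₂ C₃ : ℝ) (γ : EuclideanSpace ℝ (Fin n) → ℝ → EuclideanSpace ℝ (Fin n))
    (hωopen : IsOpen ω) (hωbdd : Bornology.IsBounded ω) (hωΩ : closure ω ⊆ Ω)
    (hω' : ω' ⊆ ω) (hω'meas : MeasurableSet ω') (hω'null : volume (ω \ ω') = 0)
    (hC₁ : 0 < C₁) (hC₂ : 0 < C₂) (hC₃ : 0 < C₃)
    (hγmeas : Measurable fun p : EuclideanSpace ℝ (Fin n) × ℝ => γ p.1 p.2)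
    (hγΩ : ∀ t ∈ ω', ∀ τ ∈ Set.Icc (0 : ℝ) 1, γ t τ ∈ Ω)
    (hγ0 : ∀ t ∈ ω', γ t 0 = t) (hγ1 : ∀ t ∈ ω', γ t 1 ∉ ω)
    (hγLip : ∀ t ∈ ω', ∃ K : NNReal, LipschitzOnWith K (γ t) (Set.Icc 0 1))
    (hγτ : ∀ t ∈ ω', ∀ᵐ τ ∂(volume.restrict (Set.Icc (0 : ℝ) 1)),
      DifferentiableAt ℝ (γ t) τ ∧ ‖deriv (γ t) τ‖ ≤ C₂)
    (hγt : ∀ τ ∈ Set.Icc (0 : ℝ) 1, Set.InjOn (fun t => γ t τ) ω' ∧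
      ∀ t ∈ ω', DifferentiableAt ℝ (fun t' => γ t' τ) t ∧
        1 / C₁ ≤ |jacDet n (fun t' => γ t' τ) t|)
    (hesc : ∀ t ∈ ω', ∀ τ ∈ Set.Icc (0 : ℝ) 1, τ ^ M / C₃ ≤ φ (γ t τ) - φ t) :
    ∀ ξ : ℝ, 0 < ξ → ∀ v : EuclideanSpace ℝ (Fin n) → ℂ,
      ContDiff ℝ 1 v → HasCompactSupport v → tsupport v ⊆ ω →
      (∫ t in ω, ‖v t‖ ^ 2)
        ≤ C₁ * C₂ ^ 2 * (∫ τ in (0 : ℝ)..1, Real.exp (-(ξ * τ ^ M / C₃))) ^ 2 *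
            ∫ t in Ω, ∑ j : Fin n,
              ‖fderiv ℝ v t (EuclideanSpace.single j 1)
                - ξ * (fderiv ℝ φ t (EuclideanSpace.single j 1) : ℝ) * v t‖ ^ 2 := by
  intro ξ hξ v hv hvcs hvω
  classical
  set g : Fin n → EuclideanSpace ℝ (Fin n) → ℂ := fun j x =>
    fderiv ℝ v x (EuclideanSpace.single j 1)
      - ξ * (fderiv ℝ φ x (EuclideanSpace.single j 1) : ℝ) * v x with hgdef
  set G2 : EuclideanSpace ℝ (Fin n) → ℝ := fun x => ∑ j : Fin n, ‖g j x‖ ^ 2 with hG2def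
  have hG2nn : ∀ x, 0 ≤ G2 x := fun x => Finset.sum_nonneg fun j _ => pow_two_nonneg _
  -- pointwise Cauchy-Schwarz estimate
  have hCS : ∀ (x u : EuclideanSpace ℝ (Fin n)),
      ‖fderiv ℝ v x u - ((ξ * fderiv ℝ φ x u : ℝ) : ℂ) * v x‖
        ≤ ‖u‖ * Real.sqrt (G2 x) := by
    intro x u
    have hdv : fderiv ℝ v x u
        = ∑ j : Fin n, (u j : ℂ) * fderiv ℝ v x (EuclideanSpace.single j 1) := by
      conv_lhs => rw [← euclid_decomp u]
      rw [map_sum]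
      exact Finset.sum_congr rfl fun j _ => by rw [ContinuousLinearMap.map_smul, Complex.real_smul]
    have hdφ : fderiv ℝ φ x u
        = ∑ j : Fin n, u j * fderiv ℝ φ x (EuclideanSpace.single j 1) := by
      conv_lhs => rw [← euclid_decomp u]
      rw [map_sum]
      exact Finset.sum_congr rfl fun j _ => by rw [ContinuousLinearMap.map_smul, smul_eq_mul]
    have hexp : fderiv ℝ v x u - ((ξ * fderiv ℝ φ x u : ℝ) : ℂ) * v x
        = ∑ j : Fin n, (u j : ℂ) * g j x := by
      rw [hdv, hdφ]
      simp only [hgdef]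
      push_cast
      rw [Finset.mul_sum, Finset.sum_mul, ← Finset.sum_sub_distrib]
      exact Finset.sum_congr rfl fun j _ => by ring
    rw [hexp]
    exact euclid_CS u (fun j => g j x)
  -- measurability
  have hmeasg : ∀ j, Measurable (g j) := by
    intro j
    simp only [hgdef]
    apply Measurable.sub
    · exact measurable_fderiv_apply_const (𝕜 := ℝ) (f := v) (EuclideanSpace.single j 1)
    · exact (measurable_const.mul
        (Complex.measurable_ofReal.comp (measurable_fderiv_apply_const (𝕜 := ℝ) (f := φ) (EuclideanSpace.single j 1)))).mul
        hv.continuous.measurable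
  have hmeasG2 : Measurable G2 := by
    simp only [hG2def]
    exact Finset.measurable_sum _ fun j _ => ((hmeasg j).norm.pow_const 2)
  set Q : EuclideanSpace ℝ (Fin n) → ℝ≥0∞ := fun x => ENNReal.ofReal (G2 x) with hQdef
  have hmeasQ : Measurable Q := hmeasG2.ennreal_ofReal
  -- vanishing of G2 outside the support
  have hG2zero : ∀ x, x ∉ tsupport v → G2 x = 0 := by
    intro x hx
    have hv0 : v x = 0 := image_eq_zero_of_notMem_tsupport hx
    have hf0 : fderiv ℝ v x = 0 := by
      by_contra h
      exact hx (support_fderiv_subset ℝ (Function.mem_support.2 h))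
    simp only [hG2def, hgdef, hv0, hf0]
    simp
  -- finiteness of W
  have hsuppΩ : tsupport v ⊆ Ω := fun x hx => hωΩ (subset_closure (hvω hx))
  have hcontG2 : ContinuousOn G2 Ω := by
    simp only [hG2def]
    apply continuousOn_finset_sum
    intro j _
    have h1 : Continuous fun x => fderiv ℝ v x (EuclideanSpace.single j 1) :=
      (ContinuousLinearMap.apply ℝ ℂ (EuclideanSpace.single j 1)).continuous.comp
        (hv.continuous_fderiv one_ne_zero)
    have h2 : ContinuousOn (fun x => fderiv ℝ φ x (EuclideanSpace.single j 1)) Ω :=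
      (ContinuousLinearMap.apply ℝ ℝ (EuclideanSpace.single j 1)).continuous.comp_continuousOn
        (hφ.continuousOn_fderiv_of_isOpen hΩ le_rfl)
    have h3 : ContinuousOn (g j) Ω := by
      simp only [hgdef]
      exact (h1.continuousOn.sub (((continuousOn_const.mul
        (Complex.continuous_ofReal.comp_continuousOn h2))).mul
        hv.continuous.continuousOn))
    exact (h3.norm.pow 2)
  obtain ⟨Cb, hCb⟩ := hvcs.exists_bound_of_continuousOn (hcontG2.mono hsuppΩ)
  set W := ∫⁻ x in Ω, Q x with hWdef
  have hWfin : W ≠ ⊤ := by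
    have hWle : W ≤ ENNReal.ofReal Cb * volume (tsupport v) := by
      rw [hWdef]
      calc ∫⁻ x in Ω, Q x
          ≤ ∫⁻ x in Ω, (tsupport v).indicator (fun _ => ENNReal.ofReal Cb) x := by
            apply lintegral_mono
            intro x
            by_cases hx : x ∈ tsupport v
            · rw [Set.indicator_of_mem hx]
              exact ENNReal.ofReal_le_ofReal (le_trans (le_abs_self _) (hCb x hx))
            · rw [Set.indicator_of_notMem hx]
              simp only [hQdef]
              rw [hG2zero x hx]
              simp
        _ ≤ ∫⁻ x, (tsupport v).indicator (fun _ => ENNReal.ofReal Cb) x :=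
            lintegral_mono' Measure.restrict_le_self le_rfl
        _ = ENNReal.ofReal Cb * volume (tsupport v) := by
            rw [lintegral_indicator (isClosed_tsupport v).measurableSet, setLIntegral_const]
    exact (hWle.trans_lt (ENNReal.mul_lt_top ENNReal.ofReal_lt_top
      hvcs.measure_lt_top)).ne
  -- the weight
  set ρ : ℝ → ℝ≥0∞ := fun τ => ENNReal.ofReal (Real.exp (-(ξ * τ ^ M / C₃))) with hρdef
  have hcontexp : Continuous fun τ : ℝ => Real.exp (-(ξ * τ ^ M / C₃)) :=
    Real.continuous_exp.comp (((continuous_const.mul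
      (Real.continuous_rpow_const (by linarith))).div_const C₃).neg)
  have hmeasexp : Measurable fun τ : ℝ => Real.exp (-(ξ * τ ^ M / C₃)) :=
    hcontexp.measurable
  have hmeasρ : Measurable ρ := hmeasexp.ennreal_ofReal
  set A := ∫⁻ τ in Set.Ioo (0:ℝ) 1, ρ τ with hAdef
  have hA1 : A ≤ 1 := by
    rw [hAdef]
    calc ∫⁻ τ in Set.Ioo (0:ℝ) 1, ρ τ ≤ ∫⁻ _ in Set.Ioo (0:ℝ) 1, (1:ℝ≥0∞) := by
          apply lintegral_mono_ae
          filter_upwards [ae_restrict_mem measurableSet_Ioo] with τ hτ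
          simp only [hρdef]
          rw [show (1:ℝ≥0∞) = ENNReal.ofReal 1 by simp]
          apply ENNReal.ofReal_le_ofReal
          rw [Real.exp_le_one_iff]
          have h1 : 0 ≤ τ ^ M := Real.rpow_nonneg hτ.1.le M
          have h2 : 0 ≤ ξ * τ ^ M / C₃ := by positivity
          linarith
      _ = 1 := by
          rw [setLIntegral_const, one_mul, Real.volume_Ioo]
          simp
  have hAfin : A ≠ ⊤ := (hA1.trans_lt ENNReal.one_lt_top).ne
  -- section measurability
  have hγsec : ∀ t, Measurable fun τ => γ t τ := fun t =>
    hγmeas.comp (measurable_const.prodMk measurable_id)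
  -- pointwise key estimate
  have hKEY : ∀ t ∈ ω', ENNReal.ofReal ‖v t‖ ≤ ENNReal.ofReal C₂ *
      ∫⁻ τ in Set.Ioo (0:ℝ) 1, ρ τ * ENNReal.ofReal (Real.sqrt (G2 (γ t τ))) := by
    intro t ht
    obtain ⟨K, hK⟩ := hγLip t ht
    have hc1 : v (γ t 1) = 0 :=
      image_eq_zero_of_notMem_tsupport (fun hmem => hγ1 t ht (hvω hmem))
    exact key_pointwise n Ω hΩ φ hφ ξ C₂ C₃ M hξ hC₂.le hC₃ v hv (γ t) t K
      (hγ0 t ht) hc1 (hγΩ t ht) hK (hγτ t ht) (hesc t ht) G2 hG2nn hCS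
  -- Cauchy-Schwarz in τ
  have hKEY2 : ∀ t ∈ ω', (ENNReal.ofReal ‖v t‖) ^ 2
      ≤ ENNReal.ofReal C₂ ^ 2 * (A * ∫⁻ τ in Set.Ioo (0:ℝ) 1, ρ τ * Q (γ t τ)) := by
    intro t ht
    set σ : ℝ → ℝ≥0∞ := fun τ => ENNReal.ofReal (Real.sqrt (G2 (γ t τ))) with hσdef
    have hσm : Measurable σ := by
      apply Measurable.ennreal_ofReal
      exact (Real.continuous_sqrt.measurable).comp (hmeasG2.comp (hγsec t))
    set I := ∫⁻ τ in Set.Ioo (0:ℝ) 1, ρ τ * σ τ with hIdef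
    have hHolder : I ≤ A ^ ((2:ℝ)⁻¹) * (∫⁻ τ in Set.Ioo (0:ℝ) 1, ρ τ * Q (γ t τ)) ^ ((2:ℝ)⁻¹) := by
      have hconj : Real.HolderConjugate 2 2 := Real.HolderConjugate.two_two
      have hfm : AEMeasurable (fun τ => ρ τ ^ ((2:ℝ)⁻¹))
          (volume.restrict (Set.Ioo (0:ℝ) 1)) := (hmeasρ.pow_const _).aemeasurable
      have hgm : AEMeasurable (fun τ => ρ τ ^ ((2:ℝ)⁻¹) * σ τ)
          (volume.restrict (Set.Ioo (0:ℝ) 1)) :=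
        ((hmeasρ.pow_const _).mul hσm).aemeasurable
      have hH := ENNReal.lintegral_mul_le_Lp_mul_Lq
        (volume.restrict (Set.Ioo (0:ℝ) 1)) hconj hfm hgm
      have heq1 : ∀ τ, (fun τ => ρ τ ^ ((2:ℝ)⁻¹)) τ * (fun τ => ρ τ ^ ((2:ℝ)⁻¹) * σ τ) τ
          = ρ τ * σ τ := by
        intro τ
        rw [← mul_assoc, ← ENNReal.rpow_add_of_nonneg _ _ (by norm_num) (by norm_num)]
        norm_num
      have heq2 : ∀ τ, (ρ τ ^ ((2:ℝ)⁻¹)) ^ (2:ℝ) = ρ τ := by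
        intro τ
        rw [← ENNReal.rpow_mul]
        norm_num
      have heq3 : ∀ τ, (ρ τ ^ ((2:ℝ)⁻¹) * σ τ) ^ (2:ℝ) = ρ τ * Q (γ t τ) := by
        intro τ
        rw [ENNReal.mul_rpow_of_nonneg _ _ (by norm_num : (0:ℝ) ≤ 2)]
        congr 1
        · exact heq2 τ
        · rw [show ((2:ℝ)) = ((2:ℕ):ℝ) by norm_num, ENNReal.rpow_natCast]
          simp only [hσdef]
          rw [← ENNReal.ofReal_pow (Real.sqrt_nonneg _)]
          rw [Real.sq_sqrt (hG2nn _)]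
      calc I = ∫⁻ τ in Set.Ioo (0:ℝ) 1,
            ((fun τ => ρ τ ^ ((2:ℝ)⁻¹)) * (fun τ => ρ τ ^ ((2:ℝ)⁻¹) * σ τ)) τ := by
            rw [hIdef]
            apply lintegral_congr
            intro τ
            exact (heq1 τ).symm
        _ ≤ (∫⁻ τ in Set.Ioo (0:ℝ) 1, (ρ τ ^ ((2:ℝ)⁻¹)) ^ (2:ℝ)) ^ (1/(2:ℝ))
            * (∫⁻ τ in Set.Ioo (0:ℝ) 1, (ρ τ ^ ((2:ℝ)⁻¹) * σ τ) ^ (2:ℝ)) ^ (1/(2:ℝ)) := hH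
        _ = A ^ ((2:ℝ)⁻¹) * (∫⁻ τ in Set.Ioo (0:ℝ) 1, ρ τ * Q (γ t τ)) ^ ((2:ℝ)⁻¹) := by
            rw [one_div]
            congr 2
            · rw [hAdef]; exact lintegral_congr heq2
            · exact lintegral_congr heq3
    calc (ENNReal.ofReal ‖v t‖) ^ 2 ≤ (ENNReal.ofReal C₂ * I) ^ 2 := by
          apply pow_le_pow_left₀ zero_le
          exact hKEY t ht
      _ = ENNReal.ofReal C₂ ^ 2 * I ^ 2 := mul_pow _ _ _
      _ ≤ ENNReal.ofReal C₂ ^ 2 * (A * ∫⁻ τ in Set.Ioo (0:ℝ) 1, ρ τ * Q (γ t τ)) := by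
          apply mul_le_mul_right
          calc I ^ 2 ≤ (A ^ ((2:ℝ)⁻¹) * (∫⁻ τ in Set.Ioo (0:ℝ) 1, ρ τ * Q (γ t τ))
                ^ ((2:ℝ)⁻¹)) ^ 2 := pow_le_pow_left₀ zero_le hHolder 2
            _ = A * ∫⁻ τ in Set.Ioo (0:ℝ) 1, ρ τ * Q (γ t τ) := by
                rw [mul_pow]
                congr 1
                · rw [← ENNReal.rpow_natCast (A ^ ((2:ℝ)⁻¹)) 2, ← ENNReal.rpow_mul]
                  norm_num
                · rw [← ENNReal.rpow_natCast (_ ^ ((2:ℝ)⁻¹)) 2, ← ENNReal.rpow_mul]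
                  norm_num
  -- change of variables
  have hCoV : ∀ τ ∈ Set.Icc (0:ℝ) 1, (∫⁻ t' in ω', Q (γ t' τ)) ≤ ENNReal.ofReal C₁ * W := by
    intro τ hτ
    obtain ⟨hinj, hdet⟩ := hγt τ hτ
    have hder : ∀ t' ∈ ω', HasFDerivWithinAt (fun t'' => γ t'' τ)
        (fderiv ℝ (fun t'' => γ t'' τ) t') ω' t' :=
      fun t' ht' => ((hdet t' ht').1.hasFDerivAt).hasFDerivWithinAt
    have himg : (fun t'' => γ t'' τ) '' ω' ⊆ Ω := by
      rintro x ⟨t', ht', rfl⟩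
      exact hγΩ t' ht' τ hτ
    have hchange := lintegral_image_eq_lintegral_abs_det_fderiv_mul volume hω'meas hder hinj Q
    have hjac : ∀ t' ∈ ω', (1:ℝ≥0∞) ≤ ENNReal.ofReal C₁
        * ENNReal.ofReal |(fderiv ℝ (fun t'' => γ t'' τ) t').det| := by
      intro t' ht'
      have h1 : 1 / C₁ ≤ |jacDet n (fun t'' => γ t'' τ) t'| := (hdet t' ht').2
      rw [jacDet_eq] at h1
      have h2 : (1:ℝ) ≤ C₁ * |(fderiv ℝ (fun t'' => γ t'' τ) t').det| := by
        rw [div_le_iff₀ hC₁] at h1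
        nlinarith
      calc (1:ℝ≥0∞) = ENNReal.ofReal 1 := by simp
        _ ≤ ENNReal.ofReal (C₁ * |(fderiv ℝ (fun t'' => γ t'' τ) t').det|) :=
            ENNReal.ofReal_le_ofReal h2
        _ = _ := ENNReal.ofReal_mul hC₁.le
    calc (∫⁻ t' in ω', Q (γ t' τ))
        ≤ ∫⁻ t' in ω', ENNReal.ofReal C₁
            * (ENNReal.ofReal |(fderiv ℝ (fun t'' => γ t'' τ) t').det| * Q (γ t' τ)) := by
          apply lintegral_mono_ae
          filter_upwards [ae_restrict_mem hω'meas] with t' ht'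
          calc Q (γ t' τ) = 1 * Q (γ t' τ) := (one_mul _).symm
            _ ≤ (ENNReal.ofReal C₁
                * ENNReal.ofReal |(fderiv ℝ (fun t'' => γ t'' τ) t').det|) * Q (γ t' τ) :=
                mul_le_mul_left (hjac t' ht') _
            _ = _ := mul_assoc _ _ _
      _ = ENNReal.ofReal C₁ * ∫⁻ t' in ω',
            ENNReal.ofReal |(fderiv ℝ (fun t'' => γ t'' τ) t').det| * Q (γ t' τ) :=
          lintegral_const_mul' _ _ ENNReal.ofReal_ne_top
      _ = ENNReal.ofReal C₁ * ∫⁻ x in (fun t'' => γ t'' τ) '' ω', Q x := by rw [hchange]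
      _ ≤ ENNReal.ofReal C₁ * W := by
          apply mul_le_mul_right
          rw [hWdef]
          exact lintegral_mono' (Measure.restrict_mono himg le_rfl) le_rfl
  -- main chain of lintegral estimates
  have hc2afin : ENNReal.ofReal C₂ ^ 2 * A ≠ ⊤ :=
    ENNReal.mul_ne_top (by simp [ENNReal.pow_ne_top, ENNReal.ofReal_ne_top]) hAfin
  have hc1wfin : ENNReal.ofReal C₁ * W ≠ ⊤ := ENNReal.mul_ne_top ENNReal.ofReal_ne_top hWfin
  have hjoint : Measurable (fun p : EuclideanSpace ℝ (Fin n) × ℝ => ρ p.2 * Q (γ p.1 p.2)) :=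
    (hmeasρ.comp measurable_snd).mul (hmeasQ.comp hγmeas)
  have hswap := lintegral_lintegral_swap (μ := volume.restrict ω')
    (ν := volume.restrict (Set.Ioo (0:ℝ) 1)) (f := fun t' τ => ρ τ * Q (γ t' τ))
    hjoint.aemeasurable
  have hmain : (∫⁻ t in ω, (ENNReal.ofReal ‖v t‖) ^ 2)
      ≤ ENNReal.ofReal C₁ * ENNReal.ofReal C₂ ^ 2 * A ^ 2 * W := by
    have hωω' : volume.restrict ω = volume.restrict ω' := by
      apply Measure.restrict_congr_set
      rw [ae_eq_set]
      refine ⟨hω'null, ?_⟩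
      have : ω' \ ω = ∅ := Set.diff_eq_empty.2 hω'
      simp [this]
    rw [hωω']
    calc ∫⁻ t in ω', (ENNReal.ofReal ‖v t‖) ^ 2
        ≤ ∫⁻ t in ω', (ENNReal.ofReal C₂ ^ 2 * A)
            * ∫⁻ τ in Set.Ioo (0:ℝ) 1, ρ τ * Q (γ t τ) := by
          apply lintegral_mono_ae
          filter_upwards [ae_restrict_mem hω'meas] with t ht
          rw [mul_assoc]
          exact hKEY2 t ht
      _ = (ENNReal.ofReal C₂ ^ 2 * A)
            * ∫⁻ t in ω', ∫⁻ τ in Set.Ioo (0:ℝ) 1, ρ τ * Q (γ t τ) :=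
          lintegral_const_mul' _ _ hc2afin
      _ = (ENNReal.ofReal C₂ ^ 2 * A)
            * ∫⁻ τ in Set.Ioo (0:ℝ) 1, ∫⁻ t in ω', ρ τ * Q (γ t τ) := by rw [hswap]
      _ = (ENNReal.ofReal C₂ ^ 2 * A)
            * ∫⁻ τ in Set.Ioo (0:ℝ) 1, ρ τ * ∫⁻ t in ω', Q (γ t τ) := by
          congr 1
          apply lintegral_congr
          intro τ
          exact lintegral_const_mul' _ _ ENNReal.ofReal_ne_top
      _ ≤ (ENNReal.ofReal C₂ ^ 2 * A)
            * ∫⁻ τ in Set.Ioo (0:ℝ) 1, ρ τ * (ENNReal.ofReal C₁ * W) := by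
          apply mul_le_mul_right
          apply lintegral_mono_ae
          filter_upwards [ae_restrict_mem measurableSet_Ioo] with τ hτ
          exact mul_le_mul_right (hCoV τ (Set.Ioo_subset_Icc_self hτ)) _
      _ = (ENNReal.ofReal C₂ ^ 2 * A) * (A * (ENNReal.ofReal C₁ * W)) := by
          rw [lintegral_mul_const' _ _ hc1wfin]
      _ = ENNReal.ofReal C₁ * ENNReal.ofReal C₂ ^ 2 * A ^ 2 * W := by ring
  -- convert to real integrals
  have hLHS : (∫ t in ω, ‖v t‖ ^ 2)
      = (∫⁻ t in ω, (ENNReal.ofReal ‖v t‖) ^ 2).toReal := by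
    rw [integral_eq_lintegral_of_nonneg_ae
      (Filter.Eventually.of_forall fun t => pow_two_nonneg _)
      ((hv.continuous.norm.pow 2).aestronglyMeasurable)]
    congr 1
    apply lintegral_congr
    intro t
    rw [← ENNReal.ofReal_pow (norm_nonneg _)]
  have hAreal : (∫ τ in (0:ℝ)..1, Real.exp (-(ξ * τ ^ M / C₃))) = A.toReal := by
    rw [intervalIntegral.integral_of_le zero_le_one, integral_Ioc_eq_integral_Ioo,
      integral_eq_lintegral_of_nonneg_ae
        (Filter.Eventually.of_forall fun τ => Real.exp_nonneg _)
        hmeasexp.aestronglyMeasurable]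
  have hWreal : (∫ t in Ω, ∑ j : Fin n,
      ‖fderiv ℝ v t (EuclideanSpace.single j 1)
        - ξ * (fderiv ℝ φ t (EuclideanSpace.single j 1) : ℝ) * v t‖ ^ 2) = W.toReal := by
    have hint : ∀ t, (∑ j : Fin n,
        ‖fderiv ℝ v t (EuclideanSpace.single j 1)
          - ξ * (fderiv ℝ φ t (EuclideanSpace.single j 1) : ℝ) * v t‖ ^ 2) = G2 t :=
      fun t => rfl
    rw [show (fun t => ∑ j : Fin n,
        ‖fderiv ℝ v t (EuclideanSpace.single j 1)
          - ξ * (fderiv ℝ φ t (EuclideanSpace.single j 1) : ℝ) * v t‖ ^ 2) = G2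
      from funext hint]
    rw [integral_eq_lintegral_of_nonneg_ae
      (Filter.Eventually.of_forall fun t => hG2nn t) hmeasG2.aestronglyMeasurable]
  rw [hLHS, hAreal, hWreal]
  have hRfin : ENNReal.ofReal C₁ * ENNReal.ofReal C₂ ^ 2 * A ^ 2 * W ≠ ⊤ := by
    apply ENNReal.mul_ne_top
    apply ENNReal.mul_ne_top
    apply ENNReal.mul_ne_top ENNReal.ofReal_ne_top
    · simp [ENNReal.pow_ne_top, ENNReal.ofReal_ne_top]
    · exact ENNReal.pow_ne_top hAfin
    · exact hWfin
  calc (∫⁻ t in ω, (ENNReal.ofReal ‖v t‖) ^ 2).toReal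
      ≤ (ENNReal.ofReal C₁ * ENNReal.ofReal C₂ ^ 2 * A ^ 2 * W).toReal :=
        ENNReal.toReal_mono hRfin hmain
    _ = C₁ * C₂ ^ 2 * A.toReal ^ 2 * W.toReal := by
        rw [ENNReal.toReal_mul, ENNReal.toReal_mul, ENNReal.toReal_mul,
          ENNReal.toReal_pow, ENNReal.toReal_pow,
          ENNReal.toReal_ofReal hC₁.le, ENNReal.toReal_ofReal hC₂.le]

end
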